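/- Let G be a group of orientation-preserving homeomorphisms of [0,1] and suppose there exists g ∈ G such that the set of fixed points of g lying in (0,1) does not accumulate at 0 and does not accumulate at 1. Then every nonempty subset M ⊆ (0,1) that is G-invariant and closed in (0,1) contains a nonempty subset K that is G-invariant, closed in (0,1), and minimal with these properties, i.e. K has no proper nonempty subset that is G-invariant and closed in (0,1). -/

import Mathlib

open Set Topology Filter

/-- Orientation-preserving homeomorphisms of `[0,1]`, i.e. increasing homeomorphisms of
`[0,1]` onto itself, are exactly the order isomorphisms of the unit interval
(an increasing bijection of `[0,1]` is automatically a homeomorphism). -/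
abbrev IntervalHomeo := unitInterval ≃o unitInterval

/-- The `G`-orbit of a point `x`. -/
def orbit (G : Subgroup IntervalHomeo) (x : unitInterval) : Set unitInterval :=
  {y | ∃ g ∈ G, g x = y}

/-- A set `M` is `G`-invariant if `g(M) = M` for every `g ∈ G`. -/
def Invariant (G : Subgroup IntervalHomeo) (M : Set unitInterval) : Prop :=
  ∀ g ∈ G, ⇑(g : IntervalHomeo) '' M = M

/-- The open interval `(0,1)` inside `[0,1]`. -/
def openI : Set unitInterval := {x | (x : ℝ) ∈ Set.Ioo (0 : ℝ) 1}

/-- `M` is contained in `S` and closed in the subspace topology of `S`. -/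
def ClosedIn (S M : Set unitInterval) : Prop := M ⊆ S ∧ closure M ∩ S ⊆ M

/- ### Auxiliary lemmas -/

lemma pow_apply_succ (h : IntervalHomeo) (n : ℕ) (x : unitInterval) :
    (h^(n+1)) x = h ((h^n) x) := by rw [pow_succ']; rfl

lemma fix_up (h : IntervalHomeo) (x : unitInterval) (hx : x < h x) :
    ∃ L : unitInterval, h L = L ∧ x < L ∧ (∀ n : ℕ, (h^n) x < L) ∧
      (∀ y : unitInterval, y < L → ∃ n : ℕ, y < (h^n) x) ∧
      (∀ m : unitInterval, h m = m → x ≤ m → L ≤ m) := by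
  have hstep : ∀ n : ℕ, (h^n) x < (h^(n+1)) x := by
    intro n
    induction n with
    | zero => simpa [pow_apply_succ] using hx
    | succ k ih =>
      rw [pow_apply_succ, pow_apply_succ]
      exact h.strictMono ih
  set f : ℕ → ℝ := fun n => ((h^n) x : ℝ) with hf
  have hfmono : StrictMono f := strictMono_nat_of_lt_succ fun n => hstep n
  have hbdd : BddAbove (range f) := by
    refine ⟨1, ?_⟩
    rintro _ ⟨n, rfl⟩
    exact ((h^n) x).2.2
  set Lr : ℝ := ⨆ n, f n with hLr
  have hLmem : Lr ∈ Icc (0:ℝ) 1 := by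
    constructor
    · exact le_trans ((h^0) x).2.1 (le_ciSup hbdd 0)
    · exact ciSup_le fun n => ((h^n) x).2.2
  set L : unitInterval := ⟨Lr, hLmem⟩ with hL
  have htend : Tendsto (fun n => (h^n) x) atTop (𝓝 L) := by
    rw [tendsto_subtype_rng]
    exact tendsto_atTop_ciSup hfmono.monotone hbdd
  have hfle : ∀ n, (h^n) x ≤ L := fun n => le_ciSup hbdd n
  have hlt : ∀ n, (h^n) x < L := fun n => lt_of_lt_of_le (hstep n) (hfle (n+1))
  have hfix : h L = L := by
    have h1 : Tendsto (fun n => h ((h^n) x)) atTop (𝓝 (h L)) :=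
      (h.toHomeomorph.continuous.continuousAt).tendsto.comp htend
    have h2 : Tendsto (fun n => (h^(n+1)) x) atTop (𝓝 L) :=
      htend.comp (tendsto_add_atTop_nat 1)
    simp only [pow_apply_succ] at h2
    exact tendsto_nhds_unique h1 h2
  refine ⟨L, hfix, ?_, hlt, ?_, ?_⟩
  · have := hlt 0
    simpa using this
  · intro y hy
    have : (y:ℝ) < ⨆ n, f n := hy
    exact (exists_lt_of_lt_ciSup this : ∃ n, (y:ℝ) < f n)
  · intro m hm hxm
    have hn : ∀ n, (h^n) x ≤ m := by
      intro n
      induction n with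
      | zero => simpa using hxm
      | succ k ih => rw [pow_apply_succ, ← hm]; exact h.monotone ih
    show Lr ≤ (m:ℝ)
    exact ciSup_le fun n => hn n

lemma fix_down (h : IntervalHomeo) (x : unitInterval) (hx : h x < x) :
    ∃ L : unitInterval, h L = L ∧ L < x ∧ (∀ n : ℕ, L < (h^n) x) ∧
      (∀ y : unitInterval, L < y → ∃ n : ℕ, (h^n) x < y) ∧
      (∀ m : unitInterval, h m = m → m ≤ x → m ≤ L) := by
  have hstep : ∀ n : ℕ, (h^(n+1)) x < (h^n) x := by
    intro n
    induction n with
    | zero => simpa [pow_apply_succ] using hx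
    | succ k ih =>
      have := h.strictMono ih
      rwa [← pow_apply_succ, ← pow_apply_succ] at this
  set f : ℕ → ℝ := fun n => ((h^n) x : ℝ) with hf
  have hfmono : StrictAnti f := strictAnti_nat_of_succ_lt fun n => hstep n
  have hbdd : BddBelow (range f) := by
    refine ⟨0, ?_⟩
    rintro _ ⟨n, rfl⟩
    exact ((h^n) x).2.1
  set Lr : ℝ := ⨅ n, f n with hLr
  have hLmem : Lr ∈ Icc (0:ℝ) 1 := by
    constructor
    · exact le_ciInf fun n => ((h^n) x).2.1
    · exact le_trans (ciInf_le hbdd 0) ((h^0) x).2.2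
  set L : unitInterval := ⟨Lr, hLmem⟩ with hL
  have htend : Tendsto (fun n => (h^n) x) atTop (𝓝 L) := by
    rw [tendsto_subtype_rng]
    exact tendsto_atTop_ciInf hfmono.antitone hbdd
  have hfle : ∀ n, L ≤ (h^n) x := fun n => ciInf_le hbdd n
  have hlt : ∀ n, L < (h^n) x := fun n => lt_of_le_of_lt (hfle (n+1)) (hstep n)
  have hfix : h L = L := by
    have h1 : Tendsto (fun n => h ((h^n) x)) atTop (𝓝 (h L)) :=
      (h.toHomeomorph.continuous.continuousAt).tendsto.comp htend
    have h2 : Tendsto (fun n => (h^(n+1)) x) atTop (𝓝 L) :=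
      htend.comp (tendsto_add_atTop_nat 1)
    simp only [pow_apply_succ] at h2
    exact tendsto_nhds_unique h1 h2
  refine ⟨L, hfix, ?_, hlt, ?_, ?_⟩
  · have := hlt 0
    simpa using this
  · intro y hy
    have : (⨅ n, f n) < (y:ℝ) := hy
    exact (exists_lt_of_ciInf_lt this : ∃ n, f n < (y:ℝ))
  · intro m hm hxm
    have hn : ∀ n, m ≤ (h^n) x := by
      intro n
      induction n with
      | zero => simpa using hxm
      | succ k ih => rw [pow_apply_succ, ← hm]; exact h.monotone ih
    show (m:ℝ) ≤ Lr
    exact le_ciInf fun n => hn n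

/-- The midpoint of the unit interval. -/
noncomputable def cpt : unitInterval := ⟨1/2, by norm_num⟩

lemma exists_orbit_mem (G : Subgroup IntervalHomeo) (g : IntervalHomeo) (hgG : g ∈ G)
    (a b : ℝ) (ha : 0 < a) (hb : b < 1) (hab : a ≤ b)
    (ha2 : a ≤ 1/2) (hb2 : 1/2 ≤ b)
    (hF : ∀ z : unitInterval, z ∈ openI → g z = z → a < (z:ℝ) ∧ (z:ℝ) < b)
    (hgc1 : a ≤ ((g cpt : unitInterval) : ℝ)) (hgc2 : ((g cpt : unitInterval) : ℝ) ≤ b)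
    (hgc1' : a ≤ ((g⁻¹ cpt : unitInterval) : ℝ)) (hgc2' : ((g⁻¹ cpt : unitInterval) : ℝ) ≤ b) :
    ∀ x ∈ openI, ∃ γ ∈ G, a ≤ (((γ : IntervalHomeo) x : unitInterval) : ℝ) ∧
      (((γ : IntervalHomeo) x : unitInterval) : ℝ) ≤ b := by
  classical
  intro x hx
  have hx0 : (0:ℝ) < (x:ℝ) := hx.1
  have hx1 : (x:ℝ) < 1 := hx.2
  rcases le_or_gt a (x:ℝ) with h1 | h1
  · rcases le_or_gt (x:ℝ) b with h2 | h2
    · exact ⟨1, G.one_mem, h1, h2⟩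
    · -- `b < x` : we need `h` with `h x < x`
      have hne : g x ≠ x := by
        intro heq
        exact absurd (hF x hx heq).2 (not_lt.mpr h2.le)
      obtain ⟨h, hhG, hxh, hhfix, hhc1, hhc2⟩ :
          ∃ h : IntervalHomeo, h ∈ G ∧ h x < x ∧ (∀ z, h z = z → g z = z) ∧
            a ≤ ((h cpt : unitInterval):ℝ) ∧ ((h cpt : unitInterval):ℝ) ≤ b := by
        rcases lt_or_gt_of_ne hne with hlt | hgt
        · exact ⟨g, hgG, hlt, fun z hz => hz, hgc1, hgc2⟩
        · refine ⟨g⁻¹, G.inv_mem hgG, ?_, ?_, hgc1', hgc2'⟩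
          · have := g.symm.strictMono hgt
            simp at this; exact this
          · intro z hz
            have : g (g⁻¹ z) = g z := congrArg g hz
            simpa using this.symm
      obtain ⟨L, hLfix, hxL, hltL, hcross, -⟩ := fix_down h x hxh
      by_cases hL0 : (0:ℝ) < (L:ℝ)
      · have hLopen : L ∈ openI := ⟨hL0, lt_of_lt_of_le hxL x.2.2⟩
        have hLF := hF L hLopen (hhfix L hLfix)
        have : L < (⟨b, ⟨ha.le.trans hab, hb.le⟩⟩ : unitInterval) := by
          show (L:ℝ) < b; exact hLF.2
        obtain ⟨n, hn⟩ := hcross _ this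
        refine ⟨h^n, G.pow_mem hhG n, ?_, ?_⟩
        · exact le_trans hLF.1.le (hltL n).le
        · exact hn.le
      · have hL0' : (L:ℝ) = 0 := le_antisymm (not_lt.mp hL0) L.2.1
        have hcpt : L < cpt := by show (L:ℝ) < (1/2:ℝ); rw [hL0']; norm_num
        obtain ⟨n0, hn0⟩ := hcross cpt hcpt
        have hex : ∃ n, (((h^n) x : unitInterval):ℝ) ≤ 1/2 := ⟨n0, le_of_lt hn0⟩
        set n := Nat.find hex with hn
        have hspec : (((h^n) x : unitInterval):ℝ) ≤ 1/2 := Nat.find_spec hex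
        have hn0' : n ≠ 0 := by
          intro h0
          rw [h0] at hspec
          simp only [pow_zero] at hspec
          have : (x:ℝ) ≤ 1/2 := hspec
          linarith
        obtain ⟨m, hm⟩ := Nat.exists_eq_succ_of_ne_zero hn0'
        have hmin : ¬ (((h^m) x : unitInterval):ℝ) ≤ 1/2 :=
          Nat.find_min hex (by omega)
        have hmc : cpt ≤ (h^m) x := by
          show (1/2:ℝ) ≤ _
          exact (not_le.mp hmin).le
        have hkey : h cpt ≤ (h^n) x := by
          rw [hm, pow_apply_succ]
          exact h.monotone hmc
        exact ⟨h^n, G.pow_mem hhG n, le_trans hhc1 hkey, le_trans hspec hb2⟩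
  · -- `x < a` : we need `h` with `x < h x`
    have hne : g x ≠ x := by
      intro heq
      exact absurd (hF x hx heq).1 (not_lt.mpr h1.le)
    obtain ⟨h, hhG, hxh, hhfix, hhc1, hhc2⟩ :
        ∃ h : IntervalHomeo, h ∈ G ∧ x < h x ∧ (∀ z, h z = z → g z = z) ∧
          a ≤ ((h cpt : unitInterval):ℝ) ∧ ((h cpt : unitInterval):ℝ) ≤ b := by
      rcases lt_or_gt_of_ne hne with hlt | hgt
      · refine ⟨g⁻¹, G.inv_mem hgG, ?_, ?_, hgc1', hgc2'⟩
        · have := g.symm.strictMono hlt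
          simp at this; exact this
        · intro z hz
          have : g (g⁻¹ z) = g z := congrArg g hz
          simpa using this.symm
      · exact ⟨g, hgG, hgt, fun z hz => hz, hgc1, hgc2⟩
    obtain ⟨L, hLfix, hxL, hltL, hcross, -⟩ := fix_up h x hxh
    by_cases hL1 : (L:ℝ) < 1
    · have hLopen : L ∈ openI := ⟨lt_of_le_of_lt x.2.1 hxL, hL1⟩
      have hLF := hF L hLopen (hhfix L hLfix)
      have : (⟨a, ⟨ha.le, hab.trans hb.le⟩⟩ : unitInterval) < L := by
        show a < (L:ℝ); exact hLF.1
      obtain ⟨n, hn⟩ := hcross _ this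
      refine ⟨h^n, G.pow_mem hhG n, hn.le, ?_⟩
      exact le_trans (hltL n).le hLF.2.le
    · have hL1' : (L:ℝ) = 1 := le_antisymm L.2.2 (not_lt.mp hL1)
      have hcpt : cpt < L := by show (1/2:ℝ) < (L:ℝ); rw [hL1']; norm_num
      obtain ⟨n0, hn0⟩ := hcross cpt hcpt
      have hex : ∃ n, (1/2:ℝ) ≤ (((h^n) x : unitInterval):ℝ) := ⟨n0, le_of_lt hn0⟩
      set n := Nat.find hex with hn
      have hspec : (1/2:ℝ) ≤ (((h^n) x : unitInterval):ℝ) := Nat.find_spec hex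
      have hn0' : n ≠ 0 := by
        intro h0
        rw [h0] at hspec
        simp only [pow_zero] at hspec
        have : (1/2:ℝ) ≤ (x:ℝ) := hspec
        linarith
      obtain ⟨m, hm⟩ := Nat.exists_eq_succ_of_ne_zero hn0'
      have hmin : ¬ (1/2:ℝ) ≤ (((h^m) x : unitInterval):ℝ) :=
        Nat.find_min hex (by omega)
      have hmc : (h^m) x ≤ cpt := by
        show _ ≤ (1/2:ℝ)
        exact (not_le.mp hmin).le
      have hkey : (h^n) x ≤ h cpt := by
        rw [hm, pow_apply_succ]
        exact h.monotone hmc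
      exact ⟨h^n, G.pow_mem hhG n, le_trans ha2 hspec, le_trans hkey hhc2⟩

/-- If some `g ∈ G` has fixed-point set in `(0,1)` accumulating at
neither `0` nor `1`, then every nonempty `G`-invariant subset of `(0,1)` closed in `(0,1)`
contains a nonempty `G`-invariant subset closed in `(0,1)` that is minimal with these
properties. -/
theorem stmt0 (G : Subgroup IntervalHomeo)
    (hg : ∃ g ∈ G, ¬ AccPt (0 : unitInterval) (𝓟 {x | x ∈ openI ∧ g x = x}) ∧
      ¬ AccPt (1 : unitInterval) (𝓟 {x | x ∈ openI ∧ g x = x})) :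
    ∀ M : Set unitInterval, M.Nonempty → Invariant G M → ClosedIn openI M →
      ∃ K ⊆ M, K.Nonempty ∧ Invariant G K ∧ ClosedIn openI K ∧
        ∀ K' ⊆ K, K'.Nonempty → Invariant G K' → ClosedIn openI K' → K' = K := by
  classical
  obtain ⟨g, hgG, hacc0, hacc1⟩ := hg
  intro M hMne hMinv hMcl
  set F : Set unitInterval := {x | x ∈ openI ∧ g x = x} with hFdef
  have hgcont : Continuous g := g.toHomeomorph.continuous
  -- `F` is closed (and hence compact)
  have hFclosed : IsClosed F := by
    apply isClosed_of_closure_subset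
    intro y hy
    have hfix : g y = y := by
      have hsub : closure F ⊆ {z | g z = z} :=
        closure_minimal (fun z hz => hz.2) (isClosed_eq hgcont continuous_id)
      exact hsub hy
    by_cases hyo : y ∈ openI
    · exact ⟨hyo, hfix⟩
    · exfalso
      have hy01 : y = 0 ∨ y = 1 := by
        rcases eq_or_lt_of_le y.2.1 with h | h
        · left; exact Subtype.ext h.symm
        · rcases eq_or_lt_of_le y.2.2 with h' | h'
          · right; exact Subtype.ext h'
          · exact absurd ⟨h, h'⟩ hyo
      have hAcc : AccPt y (𝓟 F) := by
        rw [accPt_iff_nhds]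
        intro U hU
        obtain ⟨z, hzU, hzF⟩ := mem_closure_iff_nhds.mp hy U hU
        refine ⟨z, ⟨hzU, hzF⟩, fun hzy => ?_⟩
        rw [hzy] at hzF
        exact hyo hzF.1
      rcases hy01 with rfl | rfl
      · exact hacc0 hAcc
      · exact hacc1 hAcc
  have hFcpt : IsCompact F := hFclosed.isCompact
  -- every interval homeo maps `(0,1)` into itself
  have hmaps : ∀ (h : IntervalHomeo) (z : unitInterval), z ∈ openI → h z ∈ openI := by
    intro h z hz
    have h0 : h 0 = 0 := h.map_bot
    have h1 : h 1 = 1 := h.map_top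
    constructor
    · have : h 0 < h z := h.strictMono (show (0:unitInterval) < z from hz.1)
      rw [h0] at this
      exact this
    · have : h z < h 1 := h.strictMono (show z < (1:unitInterval) from hz.2)
      rw [h1] at this
      exact this
  -- the compact set `S0` and the bounds `a`, `b`
  have hcopen : cpt ∈ openI := by constructor <;> norm_num [cpt]
  set S0 : Set unitInterval := insert cpt (insert (g cpt) (insert (g⁻¹ cpt) F)) with hS0def
  have hS0cpt : IsCompact S0 := ((hFcpt.insert _).insert _).insert _
  have hS0sub : S0 ⊆ openI := by
    intro z hz
    rcases hz with rfl | hz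
    · exact hcopen
    rcases hz with rfl | hz
    · exact hmaps g cpt hcopen
    rcases hz with rfl | hz
    · exact hmaps g⁻¹ cpt hcopen
    · exact hz.1
  have hS0ne : S0.Nonempty := ⟨cpt, mem_insert _ _⟩
  set T : Set ℝ := (fun z : unitInterval => (z:ℝ)) '' S0 with hTdef
  have hTcpt : IsCompact T := hS0cpt.image continuous_subtype_val
  have hTne : T.Nonempty := hS0ne.image _
  set α : ℝ := sInf T with hαdef
  set β : ℝ := sSup T with hβdef
  have hαT : α ∈ T := hTcpt.sInf_mem hTne
  have hβT : β ∈ T := hTcpt.sSup_mem hTne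
  have hα0 : 0 < α := by
    obtain ⟨z, hz, hz'⟩ := hαT
    rw [← hz']
    exact (hS0sub hz).1
  have hβ1 : β < 1 := by
    obtain ⟨z, hz, hz'⟩ := hβT
    rw [← hz']
    exact (hS0sub hz).2
  have hmemT : ∀ z ∈ S0, α ≤ (z:ℝ) ∧ (z:ℝ) ≤ β := by
    intro z hz
    exact ⟨csInf_le hTcpt.bddBelow ⟨z, hz, rfl⟩, le_csSup hTcpt.bddAbove ⟨z, hz, rfl⟩⟩
  have hαβ : α ≤ β := (hmemT cpt (mem_insert _ _)).1.trans (hmemT cpt (mem_insert _ _)).2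
  set a : ℝ := α/2 with hadef
  set b : ℝ := (β+1)/2 with hbdef
  have ha0 : 0 < a := by positivity
  have haα : a < α := by rw [hadef]; linarith
  have hβb : β < b := by rw [hbdef]; linarith
  have hb1 : b < 1 := by rw [hbdef]; linarith
  have hab : a ≤ b := by linarith
  have hc12 : α ≤ 1/2 ∧ (1/2:ℝ) ≤ β := hmemT cpt (mem_insert _ _)
  have ha2 : a ≤ 1/2 := haα.le.trans hc12.1
  have hb2 : (1/2:ℝ) ≤ b := hc12.2.trans hβb.le
  have hgcB := hmemT (g cpt) (mem_insert_of_mem _ (mem_insert _ _))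
  have hgcB' := hmemT (g⁻¹ cpt) (mem_insert_of_mem _ (mem_insert_of_mem _ (mem_insert _ _)))
  have hFbound : ∀ z : unitInterval, z ∈ openI → g z = z → a < (z:ℝ) ∧ (z:ℝ) < b := by
    intro z hz hfix
    have hzS : z ∈ S0 := mem_insert_of_mem _ (mem_insert_of_mem _ (mem_insert_of_mem _ ⟨hz, hfix⟩))
    have := hmemT z hzS
    exact ⟨lt_of_lt_of_le haα this.1, lt_of_le_of_lt this.2 hβb⟩
  have claim := exists_orbit_mem G g hgG a b ha0 hb1 hab ha2 hb2 hFbound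
    (haα.le.trans hgcB.1) (hgcB.2.trans hβb.le)
    (haα.le.trans hgcB'.1) (hgcB'.2.trans hβb.le)
  -- the compact window `J`
  set J : Set unitInterval := {z | a ≤ (z:ℝ) ∧ (z:ℝ) ≤ b} with hJdef
  have hJclosed : IsClosed J := by
    have : J = (fun z : unitInterval => (z:ℝ)) ⁻¹' (Icc a b) := rfl
    rw [this]
    exact isClosed_Icc.preimage continuous_subtype_val
  have hJopen : J ⊆ openI := fun z hz => ⟨lt_of_lt_of_le ha0 hz.1, lt_of_le_of_lt hz.2 hb1⟩
  -- Zorn's lemma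
  set S : Set (Set unitInterval) :=
    {K | K ⊆ M ∧ K.Nonempty ∧ Invariant G K ∧ ClosedIn openI K} with hSdef
  have hMS : M ∈ S := ⟨subset_rfl, hMne, hMinv, hMcl⟩
  have hchains : ∀ c ⊆ S, IsChain (· ⊆ ·) c → c.Nonempty → ∃ lb ∈ S, ∀ s ∈ c, lb ⊆ s := by
    intro ch hchS hchain hchne
    obtain ⟨K₀, hK₀⟩ := hchne
    refine ⟨⋂₀ ch, ⟨?_, ?_, ?_, ?_, ?_⟩, fun s hs => sInter_subset_of_mem hs⟩
    · exact (sInter_subset_of_mem hK₀).trans (hchS hK₀).1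
    · -- nonemptiness via compactness
      have hne : ∀ K, K ∈ ch → (K ∩ J).Nonempty := by
        intro K hK
        obtain ⟨x, hxK⟩ := (hchS hK).2.1
        have hxopen : x ∈ openI := (hchS hK).2.2.2.1 hxK
        obtain ⟨γ, hγG, hγ1, hγ2⟩ := claim x hxopen
        have hγx : γ x ∈ K := by
          have himg := (hchS hK).2.2.1 γ hγG
          rw [← himg]
          exact ⟨x, hxK, rfl⟩
        exact ⟨γ x, hγx, hγ1, hγ2⟩
      have hclosed : ∀ K, K ∈ ch → IsClosed (K ∩ J) := by
        intro K hK
        apply isClosed_of_closure_subset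
        intro z hz
        have hz1 : z ∈ closure K := closure_mono inter_subset_left hz
        have hz2 : z ∈ J := by
          have hsub : closure (K ∩ J) ⊆ closure J := closure_mono inter_subset_right
          rw [hJclosed.closure_eq] at hsub
          exact hsub hz
        exact ⟨(hchS hK).2.2.2.2 ⟨hz1, hJopen hz2⟩, hz2⟩
      haveI : Nonempty ch := ⟨⟨K₀, hK₀⟩⟩
      have hdir : Directed (· ⊇ ·) (fun K : ch => (K.1 ∩ J)) := by
        intro K K'
        rcases hchain.total K.2 K'.2 with h | h
        · exact ⟨K, subset_rfl, inter_subset_inter_left J h⟩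
        · exact ⟨K', inter_subset_inter_left J h, subset_rfl⟩
      obtain ⟨z, hz⟩ := IsCompact.nonempty_iInter_of_directed_nonempty_isCompact_isClosed
        (fun K : ch => (K.1 ∩ J)) hdir (fun K => hne K.1 K.2)
        (fun K => (hclosed K.1 K.2).isCompact) (fun K => hclosed K.1 K.2)
      refine ⟨z, ?_⟩
      rw [mem_sInter]
      intro K hK
      exact (mem_iInter.mp hz ⟨K, hK⟩).1
    · -- invariance
      intro γ hγ
      apply subset_antisymm
      · rintro _ ⟨y, hy, rfl⟩
        rw [mem_sInter]
        intro K hK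
        have himg := (hchS hK).2.2.1 γ hγ
        rw [← himg]
        exact ⟨y, mem_sInter.mp hy K hK, rfl⟩
      · intro z hz
        refine ⟨γ⁻¹ z, ?_, γ.apply_symm_apply z⟩
        rw [mem_sInter]
        intro K hK
        have himg := (hchS hK).2.2.1 γ⁻¹ (G.inv_mem hγ)
        rw [← himg]
        exact ⟨z, mem_sInter.mp hz K hK, rfl⟩
    · exact (sInter_subset_of_mem hK₀).trans (hchS hK₀).2.2.2.1
    · intro z hz
      rw [mem_sInter]
      intro K hK
      exact (hchS hK).2.2.2.2 ⟨closure_mono (sInter_subset_of_mem hK) hz.1, hz.2⟩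
  obtain ⟨K, hKM, hKmin⟩ := zorn_superset_nonempty S hchains M hMS
  obtain ⟨hKM', hKne, hKinv, hKcl⟩ := hKmin.prop
  refine ⟨K, hKM, hKne, hKinv, hKcl, ?_⟩
  intro K' hK'K hne' hinv' hcl'
  exact subset_antisymm hK'K (hKmin.le_of_le ⟨hK'K.trans hKM', hne', hinv', hcl'⟩ hK'K)
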